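/- For every ε ∈ (0,1) there exist constants σ_0 ≥ 2 and B ≥ 2, depending only on ε, with the following property. Let ρ = (ρ_n)_{n≥1} be any sequence of Beurling primes with ρ_1 > 1 + ε and Beurling integers (ν_n)_{n≥1}, and let σ ≥ σ_0 be such that (∑_{n≥2} ν_n^{−σ}) · (∑_{n≥1} ν_n^{−σ/4}) ≤ 1. Then for every x ≥ B there exists a real number y ∈ [x − x^{−σ/2}, x + x^{−σ/2}] such that log y does not lie in the ℚ-linear span of {log ρ_n}_{n≥1} and |y^j − ν_n/ν_m| > ν_n^{−3σ} ν_m^{−3σ} for all triples (j, n, m) ∈ ℕ³ with j, n, m ≥ 1. -/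

import Mathlib

open Set Filter MeasureTheory

noncomputable section

/-- A sequence of Beurling primes: strictly increasing, first term `> 1`,
tending to infinity, with logarithms linearly independent over `ℚ`. -/
def IsBeurlingPrimes (q : ℕ → ℝ) : Prop :=
  StrictMono q ∧ 1 < q 0 ∧ Tendsto q atTop atTop ∧
    LinearIndependent ℚ fun n => Real.log (q n)

/-- The set of Beurling integers: all finite products of the `q i` with
natural number exponents (including the empty product `1`). -/
def beurlingIntegers (q : ℕ → ℝ) : Set ℝ :=
  {x | ∃ e : ℕ →₀ ℕ, x = e.prod fun i k => q i ^ k}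

/-- `ν` is the strictly increasing enumeration of `S`, tending to infinity. -/
def IsEnumeration (ν : ℕ → ℝ) (S : Set ℝ) : Prop :=
  StrictMono ν ∧ Tendsto ν atTop atTop ∧ (∀ n, ν n ∈ S) ∧ ∀ x ∈ S, ∃ n, ν n = x

/-- Bohr's condition for the increasing enumeration `ν`:
`ν (n+1) - ν n ≥ c₁ * ν (n+1) ^ (-c₂)` for all `n`. -/
def BohrCondition (ν : ℕ → ℝ) : Prop :=
  ∃ c₁ > (0:ℝ), ∃ c₂ > (0:ℝ), ∀ n : ℕ, ν (n+1) - ν n ≥ c₁ * ν (n+1) ^ (-c₂)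

/-- The Beurling prime counting function `π_q(x) = #{n : q_n ≤ x}`. -/
def piQ (q : ℕ → ℝ) (x : ℝ) : ℕ := Nat.card {n : ℕ | q n ≤ x}

/-- The logarithmic integral `li x = ∫_1^x (1-1/u)/log u du`. -/
def li (x : ℝ) : ℝ := ∫ u in (1:ℝ)..x, (1 - u⁻¹) / Real.log u

/-- The abscissa of convergence `σ_c` of the Dirichlet series `∑ ν_n^{-s}`. -/
def sigmaC (ν : ℕ → ℝ) : ℝ := sInf {σ : ℝ | Summable fun n => ν n ^ (-σ)}

lemma countable_span_rat (f : ℕ → ℝ) :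
    (Submodule.span ℚ (Set.range f) : Set ℝ).Countable := by
  rw [← Finsupp.range_linearCombination, LinearMap.coe_range]
  exact Set.countable_range _

lemma pow_gap {a b : ℝ} (ha : 0 ≤ a) (hab : a ≤ b) (j : ℕ) :
    (b - a) * a ^ j ≤ b ^ (j + 1) - a ^ (j + 1) := by
  have h1 : a ^ j ≤ b ^ j := pow_le_pow_left₀ ha hab j
  have hb : 0 ≤ b := ha.trans hab
  have h2 : 0 ≤ a ^ j := pow_nonneg ha j
  rw [pow_succ, pow_succ]
  nlinarith

set_option maxHeartbeats 2000000 in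
/-- Existence of a good perturbed prime near any large `x`: for `ε ∈ (0,1)` there are
`σ₀, B ≥ 2` such that for any Beurling system with `ρ_1 > 1 + ε` and any `σ ≥ σ₀` with
`(∑_{n≥2} ν_n^{-σ})(∑_{n≥1} ν_n^{-σ/4}) ≤ 1`, every `x ≥ B` admits
`y ∈ [x - x^{-σ/2}, x + x^{-σ/2}]` which is multiplicatively independent of the system
and whose powers avoid all ratios `ν_n/ν_m` by `ν_n^{-3σ} ν_m^{-3σ}`. -/
theorem exists_good_prime_in_interval (ε : ℝ) (hε : ε ∈ Set.Ioo (0:ℝ) 1) :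
    ∃ σ₀ : ℝ, 2 ≤ σ₀ ∧ ∃ B : ℝ, 2 ≤ B ∧
      ∀ ρ ν : ℕ → ℝ, IsBeurlingPrimes ρ → 1 + ε < ρ 0 →
        IsEnumeration ν (beurlingIntegers ρ) →
        ∀ σ : ℝ, σ₀ ≤ σ → (Summable fun n => ν n ^ (-(σ/4))) →
          (∑' n : ℕ, ν (n+1) ^ (-σ)) * (∑' n : ℕ, ν n ^ (-(σ/4))) ≤ 1 →
          ∀ x : ℝ, B ≤ x →
            ∃ y ∈ Set.Icc (x - x ^ (-(σ/2))) (x + x ^ (-(σ/2))),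
              Real.log y ∉ Submodule.span ℚ (Set.range fun n => Real.log (ρ n)) ∧
              ∀ j n m : ℕ,
                |y ^ (j + 1) - ν n / ν m| > ν n ^ (-(3*σ)) * ν m ^ (-(3*σ)) := by
  refine ⟨2, le_rfl, 100, by norm_num, ?_⟩
  intro ρ ν hρ hρε hν σ hσ hsum4 hprod x hx
  obtain ⟨hmono, htend, hmem, hsurj⟩ := hν
  obtain ⟨hρmono, hρ1, -, -⟩ := hρ
  have hσ0 : (0:ℝ) < σ := by linarith
  have hx0 : (0:ℝ) < x := by linarith
  -- every Beurling integer is ≥ 1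
  have hS1 : ∀ z ∈ beurlingIntegers ρ, (1:ℝ) ≤ z := by
    rintro z ⟨e, rfl⟩
    rw [Finsupp.prod]
    have := Finset.prod_le_prod (f := fun _ : ℕ => (1:ℝ))
      (g := fun i => ρ i ^ e i) (s := e.support) (by intro i _; norm_num)
      (fun i _ => one_le_pow₀ (hρ1.trans_le (hρmono.monotone (Nat.zero_le i))).le)
    simpa using this
  have hν1 : ∀ n, (1:ℝ) ≤ ν n := fun n => hS1 _ (hmem n)
  have hνpos : ∀ n, (0:ℝ) < ν n := fun n => lt_of_lt_of_le one_pos (hν1 n)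
  have h1mem : (1:ℝ) ∈ beurlingIntegers ρ := ⟨0, by simp⟩
  obtain ⟨n0, hn0⟩ := hsurj 1 h1mem
  have hν0 : ν 0 = 1 := le_antisymm (hn0 ▸ hmono.monotone (Nat.zero_le n0)) (hν1 0)
  have hνgt : ∀ n : ℕ, 0 < n → 1 < ν n := fun n hn => hν0 ▸ hmono hn
  -- summability facts
  have hsumσ : Summable fun n => ν n ^ (-σ) :=
    Summable.of_nonneg_of_le (fun n => Real.rpow_nonneg (hνpos n).le _)
      (fun n => Real.rpow_le_rpow_of_exponent_le (hν1 n) (by linarith)) hsum4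
  have hsum3 : Summable fun n => ν n ^ (-(3*σ)) :=
    Summable.of_nonneg_of_le (fun n => Real.rpow_nonneg (hνpos n).le _)
      (fun n => Real.rpow_le_rpow_of_exponent_le (hν1 n) (by linarith)) hsum4
  have hsumσ' : Summable fun k : ℕ => ν (k+1) ^ (-σ) :=
    hsumσ.comp_injective (add_left_injective 1)
  have hS2ge : (1:ℝ) ≤ ∑' n : ℕ, ν n ^ (-(σ/4)) := by
    have h := Summable.le_tsum hsum4 0 fun i _ => Real.rpow_nonneg (hνpos i).le _
    rwa [hν0, Real.one_rpow] at h
  have hA0 : 0 ≤ ∑' k : ℕ, ν (k+1) ^ (-σ) :=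
    tsum_nonneg fun k => Real.rpow_nonneg (hνpos _).le _
  have hA1 : (∑' k : ℕ, ν (k+1) ^ (-σ)) ≤ 1 := by
    calc (∑' k : ℕ, ν (k+1) ^ (-σ)) = (∑' k : ℕ, ν (k+1) ^ (-σ)) * 1 := (mul_one _).symm
      _ ≤ (∑' k : ℕ, ν (k+1) ^ (-σ)) * ∑' n : ℕ, ν n ^ (-(σ/4)) :=
          mul_le_mul_of_nonneg_left hS2ge hA0
      _ ≤ 1 := hprod
  have hfullσ : (∑' n : ℕ, ν n ^ (-σ)) ≤ 2 := by
    rw [Summable.tsum_eq_zero_add hsumσ, hν0, Real.one_rpow]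
    linarith
  -- the interval
  set δ := x ^ (-(σ/2)) with hδdef
  have hδpos : 0 < δ := Real.rpow_pos_of_pos hx0 _
  have hδ100 : δ ≤ 1/100 := by
    have h1 : x ^ (-(σ/2)) ≤ x ^ (-1 : ℝ) :=
      Real.rpow_le_rpow_of_exponent_le (by linarith) (by linarith)
    rw [Real.rpow_neg_one] at h1
    have : x⁻¹ ≤ 1/100 := by
      rw [inv_le_comm₀ hx0 (by norm_num)]
      linarith
    exact h1.trans this
  have hδ1 : δ ≤ 1 := by linarith
  have hxm : x ^ (-σ) = δ * δ := by
    have h : -σ = (-(σ/2)) + (-(σ/2)) := by ring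
    rw [h, Real.rpow_add hx0]
  set I : Set ℝ := Set.Icc (x - δ) (x + δ) with hI
  have hyIlb : ∀ y ∈ I, x - 1 ≤ y := fun y hy => by
    have := hy.1; linarith
  set v : ℕ → ℝ := fun n => ν n ^ (-(3*σ)) with hv
  have hv0 : ∀ n, 0 ≤ v n := fun n => Real.rpow_nonneg (hνpos n).le _
  have hvle1 : ∀ n, v n ≤ 1 :=
    fun n => Real.rpow_le_one_of_one_le_of_nonpos (hν1 n) (by linarith)
  have hvlt1 : ∀ n : ℕ, 0 < n → v n < 1 :=
    fun n hn => Real.rpow_lt_one_of_one_lt_of_neg (hνgt n hn) (by linarith)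
  set w : ℕ → ℝ := fun n => if x - 2 < ν n then v n else 0 with hw
  have hw0 : ∀ n, 0 ≤ w n := fun n => by
    by_cases h : x - 2 < ν n <;> simp [hw, h, hv0 n]
  set Bad : ℕ × ℕ × ℕ → Set ℝ := fun p =>
    {y | y ∈ I ∧ |y ^ (p.1 + 1) - ν p.2.1 / ν p.2.2| ≤ v p.2.1 * v p.2.2} with hBad
  -- emptiness of Bad for small ν n
  have hBadEmpty : ∀ j n m : ℕ, ν n ≤ x - 2 → Bad (j, n, m) = ∅ := by
    intro j n m hnm
    ext y
    simp only [hBad, Set.mem_setOf_eq, Set.mem_empty_iff_false, iff_false, not_and]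
    intro hyI habs
    have hy1 : x - 1 ≤ y := hyIlb y hyI
    have hy2 : (1:ℝ) ≤ y := by linarith
    have hpow : y ≤ y ^ (j+1) := le_self_pow₀ hy2 (Nat.succ_ne_zero j)
    have hrle : ν n / ν m ≤ ν n := div_le_self (by linarith [hν1 n]) (hν1 m)
    have habs' : y ^ (j+1) - ν n / ν m ≤ v n * v m := le_trans (le_abs_self _) habs
    rcases Nat.eq_zero_or_pos n with hn | hn
    · rcases Nat.eq_zero_or_pos m with hm | hm
      · subst hn; subst hm
        have hvv : v 0 * v 0 = 1 := by
          simp [hv, hν0, Real.one_rpow]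
        have hr1 : ν 0 / ν 0 = 1 := by rw [hν0]; norm_num
        rw [hvv, hr1] at habs'
        linarith
      · have : v n * v m < 1 := by
          nlinarith [hvlt1 m hm, hvle1 n, hv0 n, hv0 m]
        linarith
    · have : v n * v m < 1 := by
        nlinarith [hvlt1 n hn, hvle1 m, hv0 n, hv0 m]
      linarith
  -- measure bound for each Bad set
  have hBadMeas : ∀ p : ℕ × ℕ × ℕ, volume (Bad p) ≤
      ENNReal.ofReal (4 * ((x-1)⁻¹) ^ p.1 * (w p.2.1 * v p.2.2)) := by
    rintro ⟨j, n, m⟩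
    rcases Set.eq_empty_or_nonempty (Bad (j, n, m)) with he | ⟨y0, hy0⟩
    · rw [he]; simp
    · have hxn : x - 2 < ν n := by
        by_contra h
        rw [hBadEmpty j n m (not_lt.1 h)] at hy0
        exact hy0
      have hwn : w n = v n := if_pos hxn
      have hx1pos : (0:ℝ) < x - 1 := by linarith
      have hxjpos : (0:ℝ) < (x-1) ^ j := pow_pos hx1pos j
      have key : ∀ y ∈ Bad (j,n,m), ∀ z ∈ Bad (j,n,m), y ≤ z →
          z - y ≤ 2 * (v n * v m) * ((x-1)⁻¹) ^ j := by
        intro y hy z hz hyz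
        obtain ⟨hyI, hyB⟩ := hy
        obtain ⟨hzI, hzB⟩ := hz
        have hy1 : x - 1 ≤ y := hyIlb y hyI
        have hy0' : (0:ℝ) ≤ y := by linarith
        have hgap := pow_gap hy0' hyz j
        obtain ⟨hyB1, hyB2⟩ := abs_le.1 hyB
        obtain ⟨hzB1, hzB2⟩ := abs_le.1 hzB
        have h2 : z ^ (j+1) - y ^ (j+1) ≤ 2 * (v n * v m) := by linarith
        have hxj : (x-1) ^ j ≤ y ^ j := pow_le_pow_left₀ hx1pos.le hy1 j
        have h3 : (z - y) * (x-1) ^ j ≤ 2 * (v n * v m) := by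
          calc (z - y) * (x-1) ^ j ≤ (z - y) * y ^ j :=
                mul_le_mul_of_nonneg_left hxj (by linarith)
            _ ≤ z ^ (j+1) - y ^ (j+1) := hgap
            _ ≤ 2 * (v n * v m) := h2
        have h4 : z - y ≤ 2 * (v n * v m) / (x-1) ^ j := (le_div_iff₀ hxjpos).mpr h3
        rw [div_eq_mul_inv, ← inv_pow] at h4
        exact h4
      set L := 2 * (v n * v m) * ((x-1)⁻¹) ^ j with hL
      have hL0 : 0 ≤ L := by
        have : (0:ℝ) ≤ ((x-1)⁻¹) ^ j := pow_nonneg (by positivity) j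
        have := hv0 n; have := hv0 m
        positivity
      have hsub : Bad (j,n,m) ⊆ Set.Icc (y0 - L) (y0 + L) := by
        intro y hy
        rcases le_total y y0 with h | h
        · have h1 := key y hy y0 hy0 h
          constructor <;> linarith
        · have h1 := key y0 hy0 y hy h
          constructor <;> linarith
      calc volume (Bad (j,n,m)) ≤ volume (Set.Icc (y0 - L) (y0 + L)) := measure_mono hsub
        _ = ENNReal.ofReal ((y0 + L) - (y0 - L)) := Real.volume_Icc
        _ ≤ ENNReal.ofReal (4 * ((x-1)⁻¹) ^ j * (w n * v m)) := by
            apply ENNReal.ofReal_le_ofReal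
            rw [hwn, hL]; ring_nf; rfl
  -- summability of the bound function
  have hx1pos : (0:ℝ) < x - 1 := by linarith
  have hr0 : (0:ℝ) ≤ (x-1)⁻¹ := by positivity
  have hr1 : (x-1)⁻¹ < 1 := inv_lt_one_of_one_lt₀ (by linarith)
  have hsumc : Summable fun j : ℕ => 4 * ((x-1)⁻¹) ^ j :=
    (summable_geometric_of_lt_one hr0 hr1).mul_left 4
  have hwlev : ∀ n, w n ≤ v n := by
    intro n
    by_cases h : x - 2 < ν n
    · simp only [hw, if_pos h]; exact le_rfl
    · simp only [hw, if_neg h]; exact hv0 n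
  have hsumw : Summable w := Summable.of_nonneg_of_le hw0 hwlev hsum3
  have hsumwv : Summable fun q : ℕ × ℕ => w q.1 * v q.2 :=
    hsumw.mul_of_nonneg hsum3 hw0 hv0
  have hsumg : Summable fun p : ℕ × ℕ × ℕ =>
      (4 * ((x-1)⁻¹) ^ p.1) * (w p.2.1 * v p.2.2) :=
    hsumc.mul_of_nonneg hsumwv (fun j => by positivity)
      (fun q => mul_nonneg (hw0 _) (hv0 _))
  -- tsum bounds
  have hxσ0 : (0:ℝ) ≤ x ^ (-σ) := Real.rpow_nonneg hx0.le _
  have hgv : (∑' n : ℕ, v n) ≤ 2 := by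
    have h := Summable.tsum_le_tsum
      (fun n => Real.rpow_le_rpow_of_exponent_le (hν1 n) (by linarith : -(3*σ) ≤ -σ))
      hsum3 hsumσ
    linarith
  have hgv0 : 0 ≤ ∑' n : ℕ, v n := tsum_nonneg hv0
  have hwle : ∀ n, w n ≤ x ^ (-σ) * ν n ^ (-σ) := by
    intro n
    by_cases h : x - 2 < ν n
    · simp only [hw, if_pos h]
      have hν2 : (0:ℝ) < x - 2 := by linarith
      have e1 : v n = ν n ^ (-(2*σ)) * ν n ^ (-σ) := by
        rw [hv]; dsimp only
        rw [← Real.rpow_add (hνpos n)]; ring_nf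
      have e2 : ν n ^ (-(2*σ)) ≤ (x-2) ^ (-(2*σ)) :=
        Real.rpow_le_rpow_of_nonpos hν2 h.le (by linarith)
      have e3 : (x-2) ^ (-(2*σ)) ≤ x ^ (-σ) := by
        have hs : x ^ ((1:ℝ)/2) ≤ x - 2 := by
          rw [← Real.sqrt_eq_rpow, Real.sqrt_le_iff]
          constructor
          · linarith
          · nlinarith
        have h4 : (x - 2) ^ (-(2*σ)) ≤ (x ^ ((1:ℝ)/2)) ^ (-(2*σ)) :=
          Real.rpow_le_rpow_of_nonpos (Real.rpow_pos_of_pos hx0 _) hs (by linarith)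
        rw [← Real.rpow_mul hx0.le] at h4
        have he : (1:ℝ)/2 * -(2*σ) = -σ := by ring
        rw [he] at h4
        exact h4
      calc v n = ν n ^ (-(2*σ)) * ν n ^ (-σ) := e1
        _ ≤ x ^ (-σ) * ν n ^ (-σ) :=
            mul_le_mul_of_nonneg_right (e2.trans e3) (Real.rpow_nonneg (hνpos n).le _)
    · simp only [hw, if_neg h]
      exact mul_nonneg hxσ0 (Real.rpow_nonneg (hνpos n).le _)
  have hsumw_le : (∑' n : ℕ, w n) ≤ 2 * x ^ (-σ) := by
    have h := Summable.tsum_le_tsum hwle hsumw (hsumσ.mul_left _)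
    rw [tsum_mul_left] at h
    have h2 : x ^ (-σ) * (∑' n : ℕ, ν n ^ (-σ)) ≤ x ^ (-σ) * 2 :=
      mul_le_mul_of_nonneg_left hfullσ hxσ0
    linarith
  have hsumw0 : 0 ≤ ∑' n : ℕ, w n := tsum_nonneg hw0
  have htsumg : (∑' p : ℕ × ℕ × ℕ, (4 * ((x-1)⁻¹) ^ p.1) * (w p.2.1 * v p.2.2))
      ≤ 32 * x ^ (-σ) := by
    rw [← Summable.tsum_mul_tsum hsumc hsumwv hsumg, ← Summable.tsum_mul_tsum hsumw hsum3 hsumwv]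
    have hc : (∑' j : ℕ, 4 * ((x-1)⁻¹) ^ j) ≤ 8 := by
      rw [tsum_mul_left, tsum_geometric_of_lt_one hr0 hr1]
      have h2 : (x-1)⁻¹ ≤ 2⁻¹ := inv_anti₀ (by norm_num) (by linarith)
      have h3 : (1 - (x-1)⁻¹)⁻¹ ≤ 2 := by
        rw [inv_le_comm₀ (by norm_num at h2 ⊢; linarith) (by norm_num)]
        norm_num at h2 ⊢
        linarith
      linarith
    have hc0 : 0 ≤ ∑' j : ℕ, 4 * ((x-1)⁻¹) ^ j :=
      tsum_nonneg fun j => by positivity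
    have hm1 : (∑' n : ℕ, w n) * (∑' n : ℕ, v n) ≤ (2 * x ^ (-σ)) * 2 :=
      mul_le_mul hsumw_le hgv hgv0 (by positivity)
    have hm0 : 0 ≤ (∑' n : ℕ, w n) * (∑' n : ℕ, v n) := mul_nonneg hsumw0 hgv0
    calc (∑' j : ℕ, 4 * ((x-1)⁻¹) ^ j) * ((∑' n : ℕ, w n) * (∑' n : ℕ, v n))
        ≤ 8 * ((2 * x ^ (-σ)) * 2) := mul_le_mul hc hm1 hm0 (by norm_num)
      _ = 32 * x ^ (-σ) := by ring
  -- measure of the union of bad sets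
  have hUvol : volume (⋃ p : ℕ × ℕ × ℕ, Bad p) ≤ ENNReal.ofReal (32 * x ^ (-σ)) := by
    calc volume (⋃ p : ℕ × ℕ × ℕ, Bad p) ≤ ∑' p : ℕ × ℕ × ℕ, volume (Bad p) :=
          measure_iUnion_le _
      _ ≤ ∑' p : ℕ × ℕ × ℕ,
            ENNReal.ofReal (4 * ((x-1)⁻¹) ^ p.1 * (w p.2.1 * v p.2.2)) :=
          ENNReal.tsum_le_tsum hBadMeas
      _ = ENNReal.ofReal (∑' p : ℕ × ℕ × ℕ, 4 * ((x-1)⁻¹) ^ p.1 * (w p.2.1 * v p.2.2)) :=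
          (ENNReal.ofReal_tsum_of_nonneg
            (fun p => mul_nonneg (by positivity) (mul_nonneg (hw0 _) (hv0 _))) hsumg).symm
      _ ≤ ENNReal.ofReal (32 * x ^ (-σ)) := ENNReal.ofReal_le_ofReal htsumg
  -- the countable exceptional set from the span condition
  set Z : Set ℝ := {y : ℝ | y ∈ I ∧ Real.log y ∈
      (Submodule.span ℚ (Set.range fun n => Real.log (ρ n)) : Set ℝ)} with hZ
  have hZc : Z.Countable := by
    have hinj : Set.InjOn Real.log Z := by
      intro a ha b hb hab
      have ha0 : (0:ℝ) < a := lt_of_lt_of_le (by linarith) (hyIlb a ha.1)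
      have hb0 : (0:ℝ) < b := lt_of_lt_of_le (by linarith) (hyIlb b hb.1)
      rw [← Real.exp_log ha0, ← Real.exp_log hb0, hab]
    refine Set.countable_of_injective_of_countable_image hinj
      ((countable_span_rat fun n => Real.log (ρ n)).mono ?_)
    rintro z ⟨y, hy, rfl⟩
    exact hy.2
  have hZ0 : volume Z = 0 := hZc.measure_zero _
  -- conclusion
  have hIvol : volume I = ENNReal.ofReal (2 * δ) := by
    rw [hI, Real.volume_Icc]
    congr 1
    ring
  have hGood : (I \ ((⋃ p : ℕ × ℕ × ℕ, Bad p) ∪ Z)).Nonempty := by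
    rw [Set.nonempty_iff_ne_empty]
    intro h
    have hsub : I ⊆ (⋃ p : ℕ × ℕ × ℕ, Bad p) ∪ Z := by
      rwa [Set.diff_eq_empty] at h
    have h1 : volume I ≤ volume (⋃ p : ℕ × ℕ × ℕ, Bad p) + volume Z :=
      (measure_mono hsub).trans (measure_union_le _ _)
    rw [hZ0, add_zero, hIvol] at h1
    have h2 : ENNReal.ofReal (2*δ) ≤ ENNReal.ofReal (32 * x ^ (-σ)) := h1.trans hUvol
    have h3 : 2*δ ≤ 32 * x ^ (-σ) := (ENNReal.ofReal_le_ofReal_iff (by positivity)).1 h2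
    rw [hxm] at h3
    nlinarith
  obtain ⟨y, hyI, hyN⟩ := hGood
  refine ⟨y, hyI, ?_, ?_⟩
  · intro hsp
    exact hyN (Or.inr ⟨hyI, hsp⟩)
  · intro j n m
    by_contra hcon
    push_neg at hcon
    exact hyN (Or.inl (Set.mem_iUnion.2 ⟨(j, n, m), hyI, hcon⟩))
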